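/- arXiv:2005.09300 — 3 statements merged into one kernel-verified Lean document; each statement's English description precedes it below -/
import Mathlib

section
/- (Chung–Erdős inequality) Let (Ω, A, m) be a probability space, N ≥ 1 an integer, and E_1, …, E_N measurable sets with m(⋃_{n=1}^N E_n) > 0. Then m(⋃_{n=1}^N E_n) ≥ (∑_{s=1}^N m(E_s))^2 / ∑_{s,t=1}^N m(E_s ∩ E_t). -/
open MeasureTheory ENNReal

/-- **Chung–Erdős inequality.** For a probability space `(Ω, 𝒜, m)`, an integer `N ≥ 1`,
and measurable sets `E_1, …, E_N` with `m(⋃ E_n) > 0`,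
`m(⋃ E_n) ≥ (∑ m(E_s))² / ∑_{s,t} m(E_s ∩ E_t)`. -/
theorem chung_erdos {Ω : Type*} [MeasurableSpace Ω] (m : Measure Ω) [IsProbabilityMeasure m]
    (N : ℕ) (hN : 1 ≤ N) (E : Fin N → Set Ω) (hE : ∀ i, MeasurableSet (E i))
    (hpos : 0 < m (⋃ i, E i)) :
    (∑ s, (m (E s)).toReal) ^ 2 / (∑ s, ∑ t, (m (E s ∩ E t)).toReal) ≤
      (m (⋃ i, E i)).toReal := by
  classical
  set U : Set Ω := ⋃ i, E i with hU
  have hUm : MeasurableSet U := MeasurableSet.iUnion hE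
  set f : Ω → ℝ≥0∞ := fun ω => ∑ s, (E s).indicator 1 ω with hfdef
  have hmeas : ∀ s : Fin N, Measurable ((E s).indicator (1 : Ω → ℝ≥0∞)) :=
    fun s => measurable_one.indicator (hE s)
  have hfmeas : Measurable f := Finset.measurable_sum _ (fun s _ => hmeas s)
  have hint1 : ∫⁻ ω, f ω ∂m = ∑ s, m (E s) := by
    rw [hfdef, lintegral_finset_sum _ (fun s _ => hmeas s)]
    simp [lintegral_indicator (hE _) _]
  have hsq : ∀ ω, f ω ^ (2:ℝ) = ∑ s, ∑ t, (E s ∩ E t).indicator (1 : Ω → ℝ≥0∞) ω := by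
    intro ω
    rw [ENNReal.rpow_two, sq, hfdef]
    rw [Finset.sum_mul_sum]
    refine Finset.sum_congr rfl fun s _ => Finset.sum_congr rfl fun t _ => ?_
    rw [Set.inter_indicator_one]
    rfl
  have hint2 : ∫⁻ ω, f ω ^ (2:ℝ) ∂m = ∑ s, ∑ t, m (E s ∩ E t) := by
    simp only [hsq]
    rw [lintegral_finset_sum _ (fun s _ => Finset.measurable_sum _
      (fun t _ => measurable_one.indicator ((hE s).inter (hE t))))]
    refine Finset.sum_congr rfl fun s _ => ?_
    rw [lintegral_finset_sum _ (fun t _ => measurable_one.indicator ((hE s).inter (hE t)))]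
    simp [lintegral_indicator ((hE _).inter (hE _)) _]
  have hvan : f = fun ω => f ω * U.indicator 1 ω := by
    funext ω
    by_cases hω : ω ∈ U
    · simp [hω]
    · have h0 : f ω = 0 := by
        rw [hfdef]
        refine Finset.sum_eq_zero fun s _ => ?_
        have : ω ∉ E s := fun h => hω (Set.mem_iUnion.mpr ⟨s, h⟩)
        simp [Set.indicator_of_notMem this]
      simp [h0, hω]
  have hconj : (2:ℝ).HolderConjugate 2 := by
    constructor <;> norm_num
  have hholder := ENNReal.lintegral_mul_le_Lp_mul_Lq m hconj hfmeas.aemeasurable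
    ((measurable_one.indicator hUm).aemeasurable)
  have hUint : ∫⁻ ω, (U.indicator (1 : Ω → ℝ≥0∞)) ω ^ (2:ℝ) ∂m = m U := by
    have : ∀ ω, (U.indicator (1 : Ω → ℝ≥0∞)) ω ^ (2:ℝ) = U.indicator 1 ω := by
      intro ω
      by_cases hω : ω ∈ U <;> simp [hω]
    simp only [this]
    simp [lintegral_indicator hUm _]
  replace hholder : ∑ s, m (E s) ≤
      (∑ s, ∑ t, m (E s ∩ E t)) ^ (1/2:ℝ) * (m U) ^ (1/2:ℝ) := by
    calc ∑ s, m (E s) = ∫⁻ ω, f ω ∂m := hint1.symm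
      _ = ∫⁻ a, ((f * U.indicator 1 : Ω → ℝ≥0∞)) a ∂m := lintegral_congr fun a => congrFun hvan a
      _ ≤ _ := hholder
      _ = _ := by rw [hint2, hUint]
  -- square both sides
  have key : (∑ s, m (E s)) ^ (2:ℝ) ≤ (∑ s, ∑ t, m (E s ∩ E t)) * m U := by
    calc (∑ s, m (E s)) ^ (2:ℝ)
        ≤ ((∑ s, ∑ t, m (E s ∩ E t)) ^ (1/2:ℝ) * m U ^ (1/2:ℝ)) ^ (2:ℝ) := by
          exact ENNReal.rpow_le_rpow hholder (by norm_num)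
      _ = (∑ s, ∑ t, m (E s ∩ E t)) * m U := by
          rw [ENNReal.mul_rpow_of_nonneg _ _ (by norm_num : (0:ℝ) ≤ 2),
            ← ENNReal.rpow_mul, ← ENNReal.rpow_mul]
          norm_num
  have hfin1 : (∑ s, m (E s)) ≠ ⊤ := by
    refine (lt_of_le_of_lt (Finset.sum_le_sum fun s _ => prob_le_one) ?_).ne
    simp [ENNReal.mul_lt_top, ENNReal.natCast_lt_top]
  have hfin2 : (∑ s, ∑ t, m (E s ∩ E t)) ≠ ⊤ := by
    refine (lt_of_le_of_lt (Finset.sum_le_sum fun s _ =>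
      (Finset.sum_le_sum fun t _ => prob_le_one)) ?_).ne
    simp [ENNReal.mul_lt_top, ENNReal.natCast_lt_top]
  have hUfin : m U ≠ ⊤ := (measure_lt_top m U).ne
  have keyR : (∑ s, (m (E s)).toReal) ^ 2 ≤
      (∑ s, ∑ t, (m (E s ∩ E t)).toReal) * (m U).toReal := by
    have h1 : (∑ s, (m (E s)).toReal) = (∑ s, m (E s)).toReal := by
      rw [ENNReal.toReal_sum (fun s _ => (measure_lt_top m _).ne)]
    have h2 : (∑ s, ∑ t, (m (E s ∩ E t)).toReal) = (∑ s, ∑ t, m (E s ∩ E t)).toReal := by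
      rw [ENNReal.toReal_sum (fun s _ => by
        refine (lt_of_le_of_lt (Finset.sum_le_sum fun t _ => prob_le_one) ?_).ne
        simp [ENNReal.mul_lt_top, ENNReal.natCast_lt_top])]
      exact Finset.sum_congr rfl fun s _ =>
        (ENNReal.toReal_sum (fun t _ => (measure_lt_top m _).ne)).symm
    rw [h1, h2, ← ENNReal.toReal_mul]
    have := ENNReal.toReal_mono (by
      exact ENNReal.mul_ne_top hfin2 hUfin) key
    rw [ENNReal.rpow_two] at this
    calc (∑ s, m (E s)).toReal ^ 2 = ((∑ s, m (E s)) ^ 2).toReal := by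
          rw [ENNReal.toReal_pow]
      _ ≤ _ := this
  rcases eq_or_lt_of_le (Finset.sum_nonneg fun s _ => Finset.sum_nonneg fun t _ =>
      ENNReal.toReal_nonneg : (0:ℝ) ≤ ∑ s, ∑ t, (m (E s ∩ E t)).toReal) with hB | hB
  · rw [← hB, _root_.div_zero]
    exact ENNReal.toReal_nonneg
  · rw [div_le_iff₀ hB]
    linarith [keyR]
end

section
/- For any function ψ: ℕ → [0,∞), if ∑_{n=1}^∞ ψ(2^n)^γ < ∞ where γ = log 2 / log 3, then μ(W₂(ψ)) = 0, where μ is the natural measure on the middle-third Cantor set. -/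
open MeasureTheory Filter Topology ENNReal

/-- γ = log 2 / log 3. -/
noncomputable def cantorDim : ℝ := Real.log 2 / Real.log 3

/-- The natural measure on the middle-third Cantor set. -/
noncomputable def cantorMeasure : Measure ℝ :=
  (μH[cantorDim] : Measure ℝ).restrict cantorSet

/-- `W₂(ψ)`: points of `[0,1]` within `ψ(q)/q` of infinitely many dyadic rationals `p/q`,
`q = 2^n`. -/
def W2 (ψ : ℕ → ℝ) : Set ℝ :=
  {x ∈ Set.Icc (0:ℝ) 1 |
    {pn : ℤ × ℕ | |x - (pn.1 : ℝ) / 2 ^ pn.2| < ψ (2 ^ pn.2) / 2 ^ pn.2}.Infinite}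

lemma cantorDim_pos : 0 < cantorDim :=
  div_pos (Real.log_pos one_lt_two) (Real.log_pos (by norm_num))

lemma cantorDim_le_one : cantorDim ≤ 1 := by
  rw [cantorDim, div_le_one (Real.log_pos (by norm_num))]
  exact Real.log_le_log (by norm_num) (by norm_num)

lemma rpow_cantorDim : (3:ℝ) ^ cantorDim = 2 := by
  rw [cantorDim, Real.rpow_def_of_pos (by norm_num)]
  rw [mul_div_assoc', mul_comm, mul_div_assoc, div_self (Real.log_pos (by norm_num)).ne', mul_one,
    Real.exp_log (by norm_num)]

lemma exists_pow3 (n : ℕ) : ∃ k : ℕ, 2 ^ n ≤ 3 ^ k ∧ 3 ^ k ≤ 3 * 2 ^ n := by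
  induction n with
  | zero => exact ⟨0, by norm_num⟩
  | succ n ih =>
    obtain ⟨k, h1, h2⟩ := ih
    by_cases h : 2 ^ (n+1) ≤ 3 ^ k
    · exact ⟨k, h, h2.trans (by have := Nat.pow_le_pow_right (by norm_num : 1 ≤ 2) n.le_succ; omega)⟩
    · push_neg at h
      refine ⟨k+1, ?_, ?_⟩
      · have : 2 ^ (n+1) = 2 * 2 ^ n := by ring
        calc 2 ^ (n+1) = 2 * 2 ^ n := by ring
          _ ≤ 2 * 3 ^ k := by omega
          _ ≤ 3 ^ (k+1) := by rw [pow_succ]; omega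
      · calc 3 ^ (k+1) = 3 * 3 ^ k := by ring
          _ ≤ 3 * 2 ^ (n+1) := by omega

noncomputable def kk (n : ℕ) : ℕ := (exists_pow3 n).choose

lemma kk_spec1 (n : ℕ) : (2:ℕ) ^ n ≤ 3 ^ kk n := (exists_pow3 n).choose_spec.1
lemma kk_spec2 (n : ℕ) : (3:ℕ) ^ kk n ≤ 3 * 2 ^ n := (exists_pow3 n).choose_spec.2

/-- left endpoints of level-k intervals -/
noncomputable def endpts : ℕ → List ℝ
  | 0 => [0]
  | k+1 => ((endpts k).map (· / 3)) ++ ((endpts k).map (fun a => (2+a)/3))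

@[simp] lemma endpts_zero : endpts 0 = [0] := rfl
@[simp] lemma endpts_succ (k : ℕ) :
    endpts (k+1) = ((endpts k).map (· / 3)) ++ ((endpts k).map (fun a => (2+a)/3)) := rfl

lemma endpts_length (k : ℕ) : (endpts k).length = 2 ^ k := by
  induction k with
  | zero => rfl
  | succ k ih => simp [ih]; ring

lemma preCantorSet_subset (k : ℕ) :
    ∀ x ∈ preCantorSet k, ∃ a ∈ endpts k, a ≤ x ∧ x ≤ a + (3:ℝ)⁻¹ ^ k := by
  induction k with
  | zero =>
    intro x hx
    exact ⟨0, by simp, by simpa using hx.1, by simpa using hx.2⟩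
  | succ k ih =>
    intro x hx
    rcases hx with ⟨y, hy, rfl⟩ | ⟨y, hy, rfl⟩
    · obtain ⟨a, ha, h1, h2⟩ := ih y hy
      refine ⟨a / 3, ?_, by linarith, ?_⟩
      · simp only [endpts_succ, List.mem_append, List.mem_map]
        exact Or.inl ⟨a, ha, rfl⟩
      · rw [pow_succ]
        simp only
        rw [div_le_iff₀ (by norm_num : (0:ℝ) < 3)] at *
        nlinarith [h2]
    · obtain ⟨a, ha, h1, h2⟩ := ih y hy
      refine ⟨(2+a) / 3, ?_, by simp only; linarith, ?_⟩
      · simp only [endpts_succ, List.mem_append, List.mem_map]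
        exact Or.inr ⟨a, ha, rfl⟩
      · simp only
        rw [pow_succ]
        rw [div_le_iff₀ (by norm_num : (0:ℝ) < 3)] at *
        nlinarith [h2]

/-- center of the j-th candidate ball at level n near left endpoint a, radius r -/
noncomputable def ctr (n : ℕ) (r a : ℝ) (j : ℕ) : ℝ :=
    ((⌊(a - r) * 2 ^ n⌋ + 1 + (j:ℤ) : ℤ) : ℝ) / 2 ^ n

lemma mem_cover {x : ℝ} (hx : x ∈ cantorSet) {n : ℕ} {p : ℤ} {ψn : ℝ} (hψ1 : ψn ≤ 1)
    (hp : |x - (p:ℝ) / 2 ^ n| < ψn / 2 ^ n) :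
    ∃ i : Fin (endpts (kk n)).length, ∃ j : Fin 3,
      x ∈ Metric.ball (ctr n (ψn / 2 ^ n) ((endpts (kk n)).get i) (j:ℕ)) (ψn / 2 ^ n) := by
  have h2n : (0:ℝ) < 2 ^ n := by positivity
  set r : ℝ := ψn / 2 ^ n with hr
  have hxk : x ∈ preCantorSet (kk n) := by
    have := Set.mem_iInter.mp hx (kk n); exact this
  obtain ⟨a, ha, hax1, hax2⟩ := preCantorSet_subset (kk n) x hxk
  obtain ⟨i, hi⟩ := List.mem_iff_get.mp ha
  have hrpos : 0 < r := lt_of_le_of_lt (abs_nonneg _) hp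
  have h3k : (3:ℝ)⁻¹ ^ kk n * 2 ^ n ≤ 1 := by
    have : (2:ℝ) ^ n ≤ 3 ^ kk n := by exact_mod_cast (kk_spec1 n)
    rw [inv_pow, inv_mul_le_iff₀ (by positivity), mul_one]
    exact this
  have habs := abs_lt.mp hp
  have hplt : x - r < (p:ℝ) / 2 ^ n ∧ (p:ℝ) / 2 ^ n < x + r := by
    constructor <;> [linarith [habs.2]; linarith [habs.1]]
  set m₀ : ℤ := ⌊(a - r) * 2 ^ n⌋ with hm₀
  have hlow : m₀ + 1 ≤ p := by
    have h1 : (a - r) * 2 ^ n < (p:ℝ) := by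
      have : a - r ≤ x - r := by linarith
      have h2 : a - r < (p:ℝ) / 2 ^ n := lt_of_le_of_lt this hplt.1
      calc (a - r) * 2 ^ n < ((p:ℝ) / 2 ^ n) * 2 ^ n := by
            exact mul_lt_mul_of_pos_right h2 h2n
        _ = (p:ℝ) := by field_simp
    have := Int.floor_le ((a - r) * 2 ^ n)
    have : (m₀ : ℝ) < (p:ℝ) := lt_of_le_of_lt this h1
    exact_mod_cast Int.lt_iff_add_one_le.mp (by exact_mod_cast this)
  have hhigh : p ≤ m₀ + 3 := by
    have h1 : (p:ℝ) < (a - r) * 2 ^ n + 3 := by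
      have hx3 : (p:ℝ) / 2 ^ n < a + (3:ℝ)⁻¹ ^ kk n + r := by
        have := hplt.2; linarith
      have h2 : (p:ℝ) < (a + (3:ℝ)⁻¹ ^ kk n + r) * 2 ^ n := by
        rw [div_lt_iff₀ h2n] at hx3; exact hx3
      have hrψ : r * 2 ^ n = ψn := by rw [hr]; field_simp
      have : (a + (3:ℝ)⁻¹ ^ kk n + r) * 2 ^ n
          = (a - r) * 2 ^ n + (3:ℝ)⁻¹ ^ kk n * 2 ^ n + 2 * (r * 2 ^ n) := by ring
      rw [this, hrψ] at h2
      linarith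
    have h2 : (p:ℝ) < (m₀:ℝ) + 4 := by
      have := Int.lt_floor_add_one ((a - r) * 2 ^ n)
      linarith
    have : p < m₀ + 4 := by exact_mod_cast h2
    omega
  refine ⟨i, ⟨(p - (m₀ + 1)).toNat, by omega⟩, ?_⟩
  have hc : ctr n r ((endpts (kk n)).get i) ((p - (m₀+1)).toNat) = (p:ℝ) / 2 ^ n := by
    rw [ctr, hi]
    congr 2
    push_cast [Int.toNat_of_nonneg (by omega : (0:ℤ) ≤ p - (m₀+1))]
    omega
  simp only [Fin.val_mk, hc]
  rw [Metric.mem_ball, Real.dist_eq]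
  exact hp

lemma emetric_diam_ball {x : ℝ} {r : ℝ} :
    EMetric.diam (Metric.ball x r) ≤ ENNReal.ofReal (2 * r) := by
  refine EMetric.diam_le fun a ha b hb => ?_
  rw [Metric.mem_ball] at ha hb
  rw [edist_dist]
  refine ENNReal.ofReal_le_ofReal ?_
  calc dist a b ≤ dist a x + dist b x := dist_triangle_right a b x
    _ ≤ 2 * r := by linarith

lemma real_bound (n : ℕ) {ψn : ℝ} (h0 : 0 ≤ ψn) :
    (3:ℝ) * 2 ^ kk n * (2 * (ψn / 2 ^ n)) ^ cantorDim ≤ 12 * ψn ^ cantorDim := by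
  have hγ := cantorDim_pos
  have hP : (0:ℝ) < ((2:ℝ) ^ n) ^ cantorDim := Real.rpow_pos_of_pos (by positivity) _
  set P : ℝ := ((2:ℝ) ^ n) ^ cantorDim with hPdef
  have h2k : (2:ℝ) ^ kk n ≤ 2 * P := by
    have e0 : (2:ℝ) ^ kk n = ((3:ℝ) ^ kk n) ^ cantorDim := by
      rw [← Real.rpow_natCast 3 (kk n), ← Real.rpow_mul (by norm_num), mul_comm,
        Real.rpow_mul (by norm_num), Real.rpow_natCast, rpow_cantorDim]
    have e1 : ((3:ℝ) ^ kk n) ≤ 3 * 2 ^ n := by exact_mod_cast kk_spec2 n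
    rw [e0]
    calc ((3:ℝ) ^ kk n) ^ cantorDim ≤ ((3:ℝ) * 2 ^ n) ^ cantorDim :=
          Real.rpow_le_rpow (by positivity) e1 hγ.le
      _ = (3:ℝ) ^ cantorDim * ((2:ℝ) ^ n) ^ cantorDim :=
          Real.mul_rpow (by norm_num) (by positivity)
      _ = 2 * P := by rw [rpow_cantorDim]
  have h2γ : (2:ℝ) ^ cantorDim ≤ 2 := by
    calc (2:ℝ) ^ cantorDim ≤ (2:ℝ) ^ (1:ℝ) :=
        Real.rpow_le_rpow_of_exponent_le one_le_two cantorDim_le_one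
      _ = 2 := Real.rpow_one 2
  have hψγ : (0:ℝ) ≤ ψn ^ cantorDim := Real.rpow_nonneg h0 _
  have e2 : (2 * (ψn / 2 ^ n)) ^ cantorDim
      = (2:ℝ) ^ cantorDim * ψn ^ cantorDim / P := by
    rw [show (2:ℝ) * (ψn / 2 ^ n) = (2 * ψn) / 2 ^ n by ring,
      Real.div_rpow (by positivity) (by positivity),
      Real.mul_rpow (by norm_num) h0]
  rw [e2]
  have key : (3:ℝ) * 2 ^ kk n * ((2:ℝ) ^ cantorDim * ψn ^ cantorDim) ≤ 12 * ψn ^ cantorDim * P := by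
    have h1 : (2:ℝ) ^ kk n * (2:ℝ) ^ cantorDim ≤ (2 * P) * 2 :=
      mul_le_mul h2k h2γ (by positivity) (by positivity)
    calc (3:ℝ) * 2 ^ kk n * ((2:ℝ) ^ cantorDim * ψn ^ cantorDim)
        = 3 * ((2:ℝ) ^ kk n * (2:ℝ) ^ cantorDim) * ψn ^ cantorDim := by ring
      _ ≤ 3 * ((2 * P) * 2) * ψn ^ cantorDim := by
          have := mul_le_mul_of_nonneg_left h1 (by norm_num : (0:ℝ) ≤ 3)
          exact mul_le_mul_of_nonneg_right this hψγ
      _ = 12 * ψn ^ cantorDim * P := by ring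
  calc (3:ℝ) * 2 ^ kk n * ((2:ℝ) ^ cantorDim * ψn ^ cantorDim / P)
      = (3:ℝ) * 2 ^ kk n * ((2:ℝ) ^ cantorDim * ψn ^ cantorDim) / P := by ring
    _ ≤ 12 * ψn ^ cantorDim * P / P := by gcongr
    _ = 12 * ψn ^ cantorDim := by field_simp

lemma sum_bound (n : ℕ) {ψn : ℝ} (h0 : 0 ≤ ψn) :
    (∑' q : Fin (endpts (kk n)).length × Fin 3,
        EMetric.diam (Metric.ball (ctr n (ψn / 2 ^ n) ((endpts (kk n)).get q.1) (q.2:ℕ))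
          (ψn / 2 ^ n)) ^ cantorDim)
      ≤ ENNReal.ofReal (12 * ψn ^ cantorDim) := by
  have hγ := cantorDim_pos
  have hr : (0:ℝ) ≤ ψn / 2 ^ n := by positivity
  have hterm : ∀ q : Fin (endpts (kk n)).length × Fin 3,
      EMetric.diam (Metric.ball (ctr n (ψn / 2 ^ n) ((endpts (kk n)).get q.1) (q.2:ℕ))
          (ψn / 2 ^ n)) ^ cantorDim
        ≤ ENNReal.ofReal ((2 * (ψn / 2 ^ n)) ^ cantorDim) := by
    intro q
    calc EMetric.diam (Metric.ball _ (ψn / 2 ^ n)) ^ cantorDim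
        ≤ ENNReal.ofReal (2 * (ψn / 2 ^ n)) ^ cantorDim :=
          ENNReal.rpow_le_rpow emetric_diam_ball hγ.le
      _ = ENNReal.ofReal ((2 * (ψn / 2 ^ n)) ^ cantorDim) :=
          ENNReal.ofReal_rpow_of_nonneg (by positivity) hγ.le
  calc (∑' q : Fin (endpts (kk n)).length × Fin 3, _)
      ≤ ∑' _q : Fin (endpts (kk n)).length × Fin 3,
          ENNReal.ofReal ((2 * (ψn / 2 ^ n)) ^ cantorDim) := ENNReal.tsum_le_tsum hterm
    _ = ((endpts (kk n)).length * 3 : ℕ) * ENNReal.ofReal ((2 * (ψn / 2 ^ n)) ^ cantorDim) := by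
        rw [tsum_fintype]
        simp [Finset.card_univ, mul_comm]
    _ ≤ ENNReal.ofReal (12 * ψn ^ cantorDim) := by
        rw [endpts_length, ← ENNReal.ofReal_natCast, ← ENNReal.ofReal_mul (by positivity)]
        refine ENNReal.ofReal_le_ofReal ?_
        push_cast
        calc ((2:ℝ) ^ kk n * 3) * (2 * (ψn / 2 ^ n)) ^ cantorDim
            = 3 * 2 ^ kk n * (2 * (ψn / 2 ^ n)) ^ cantorDim := by ring
          _ ≤ 12 * ψn ^ cantorDim := real_bound n h0

lemma infinite_n {x : ℝ} {ψ : ℕ → ℝ}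
    (h : {pn : ℤ × ℕ | |x - (pn.1 : ℝ) / 2 ^ pn.2| < ψ (2 ^ pn.2) / 2 ^ pn.2}.Infinite) :
    {n : ℕ | ∃ p : ℤ, |x - (p:ℝ) / 2 ^ n| < ψ (2 ^ n) / 2 ^ n}.Infinite := by
  have hfinP : ∀ n : ℕ, {p : ℤ | |x - (p:ℝ) / 2 ^ n| < ψ (2 ^ n) / 2 ^ n}.Finite := by
    intro n
    set r := ψ (2 ^ n) / 2 ^ n with hrdef
    apply Set.Finite.subset (Set.finite_Icc ⌊(x - r) * 2 ^ n⌋ ⌈(x + r) * 2 ^ n⌉)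
    intro p hp
    simp only [Set.mem_setOf_eq] at hp
    have h2n : (0:ℝ) < 2 ^ n := by positivity
    have habs := abs_lt.mp hp
    have hl : (x - r) * 2 ^ n < (p:ℝ) := by
      have h1 : x - r < (p:ℝ) / 2 ^ n := by linarith [habs.2]
      exact (lt_div_iff₀ h2n).mp h1
    have hu : (p:ℝ) < (x + r) * 2 ^ n := by
      have h1 : (p:ℝ) / 2 ^ n < x + r := by linarith [habs.1]
      exact (div_lt_iff₀ h2n).mp h1
    constructor
    · have := (Int.floor_le ((x - r) * 2 ^ n)).trans_lt hl
      exact_mod_cast this.le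
    · have := hu.trans_le (Int.le_ceil ((x + r) * 2 ^ n))
      exact_mod_cast this.le
  by_contra hninf
  rw [Set.not_infinite] at hninf
  refine h ?_
  refine Set.Finite.subset (hninf.biUnion (fun n _ =>
    ((hfinP n).prod (Set.finite_singleton n)))) ?_
  rintro ⟨p, n⟩ hpn
  simp only [Set.mem_setOf_eq] at hpn
  exact Set.mem_biUnion ⟨p, hpn⟩ ⟨hpn, rfl⟩

/-- If `∑ ψ(2ⁿ)^γ < ∞` then `μ(W₂(ψ)) = 0`. -/
theorem cantorMeasure_W2_eq_zero_of_summable_rpow (ψ : ℕ → ℝ) (hψ : ∀ n, 0 ≤ ψ n)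
    (hsum : Summable fun n : ℕ => ψ (2 ^ n) ^ cantorDim) :
    cantorMeasure (W2 ψ) = 0 := by
  have hγ := cantorDim_pos
  -- N₀ with ψ(2^n) ≤ 1 for n ≥ N₀
  obtain ⟨N₀, hN₀⟩ : ∃ N₀ : ℕ, ∀ n ≥ N₀, ψ (2 ^ n) ≤ 1 := by
    have htend : Tendsto (fun n => ψ (2 ^ n) ^ cantorDim) atTop (𝓝 0) :=
      hsum.tendsto_atTop_zero
    obtain ⟨N₀, hN⟩ := eventually_atTop.mp (htend.eventually_lt_const one_pos)
    refine ⟨N₀, fun n hn => ?_⟩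
    by_contra h'
    push_neg at h'
    have := Real.one_le_rpow h'.le hγ.le
    linarith [hN n hn]
  have hres : cantorMeasure (W2 ψ) = μH[cantorDim] (W2 ψ ∩ cantorSet) :=
    Measure.restrict_apply' isClosed_cantorSet.measurableSet
  rw [hres]
  set s := W2 ψ ∩ cantorSet with hs
  set f : ℕ → ℝ≥0∞ := fun n => ENNReal.ofReal (ψ (2 ^ n) ^ cantorDim) with hf
  have hftop : ∑' n, f n ≠ ⊤ := by
    rw [← ENNReal.ofReal_tsum_of_nonneg (fun n => Real.rpow_nonneg (hψ _) _) hsum]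
    exact ENNReal.ofReal_ne_top
  have hle := MeasureTheory.Measure.hausdorffMeasure_le_liminf_tsum (d := cantorDim) (s := s)
      (l := atTop) (r := fun N => ENNReal.ofReal (2 * (2⁻¹:ℝ) ^ N))
      (t := fun (N : ℕ) (q : (m : ℕ) × (Fin (endpts (kk (N + m))).length × Fin 3)) =>
        Metric.ball (ctr (N + q.1) (ψ (2 ^ (N + q.1)) / 2 ^ (N + q.1))
          ((endpts (kk (N + q.1))).get q.2.1) ((q.2.2 : ℕ)))
          (ψ (2 ^ (N + q.1)) / 2 ^ (N + q.1)))
      ?_ ?_ ?_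
  · refine le_antisymm (hle.trans ?_) zero_le
    have hsum_le : ∀ N : ℕ,
        (∑' q : (m : ℕ) × (Fin (endpts (kk (N + m))).length × Fin 3),
          EMetric.diam (Metric.ball (ctr (N + q.1) (ψ (2 ^ (N + q.1)) / 2 ^ (N + q.1))
            ((endpts (kk (N + q.1))).get q.2.1) ((q.2.2 : ℕ)))
            (ψ (2 ^ (N + q.1)) / 2 ^ (N + q.1))) ^ cantorDim)
          ≤ 12 * ∑' m, f (m + N) := by
      intro N
      rw [ENNReal.tsum_sigma']
      calc (∑' (m : ℕ) (ij : Fin (endpts (kk (N + m))).length × Fin 3),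
            EMetric.diam (Metric.ball (ctr (N + m) (ψ (2 ^ (N + m)) / 2 ^ (N + m))
              ((endpts (kk (N + m))).get ij.1) ((ij.2 : ℕ)))
              (ψ (2 ^ (N + m)) / 2 ^ (N + m))) ^ cantorDim)
          ≤ ∑' (m : ℕ), ENNReal.ofReal (12 * ψ (2 ^ (N + m)) ^ cantorDim) :=
            ENNReal.tsum_le_tsum (fun m => sum_bound (N + m) (hψ _))
        _ = ∑' (m : ℕ), 12 * f (m + N) := by
            refine tsum_congr fun m => ?_
            rw [ENNReal.ofReal_mul (by norm_num), hf]
            simp only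
            rw [add_comm N m]
            norm_num
        _ = 12 * ∑' m, f (m + N) := ENNReal.tsum_mul_left
    have htail : Tendsto (fun N => (12:ℝ≥0∞) * ∑' m, f (m + N)) atTop (𝓝 0) := by
      have h0 := ENNReal.tendsto_sum_nat_add f hftop
      have := ENNReal.Tendsto.const_mul (a := (12:ℝ≥0∞)) h0 (Or.inr (by norm_num))
      simpa using this
    calc liminf _ atTop ≤ liminf (fun N => (12:ℝ≥0∞) * ∑' m, f (m + N)) atTop :=
          liminf_le_liminf (Eventually.of_forall hsum_le)
      _ = 0 := htail.liminf_eq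
  · -- hr : radii tend to 0
    have h1 : Tendsto (fun N : ℕ => 2 * (2⁻¹:ℝ) ^ N) atTop (𝓝 0) := by
      simpa using (tendsto_pow_atTop_nhds_zero_of_lt_one (by norm_num) (by norm_num : (2⁻¹:ℝ) < 1)).const_mul 2
    have := ENNReal.tendsto_ofReal h1
    simpa using this
  · -- ht : diam bounds
    filter_upwards [eventually_ge_atTop N₀] with N hN q
    refine emetric_diam_ball.trans (ENNReal.ofReal_le_ofReal ?_)
    have h1 : ψ (2 ^ (N + q.1)) / 2 ^ (N + q.1) ≤ (2⁻¹:ℝ) ^ N := by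
      have h2 : ψ (2 ^ (N + q.1)) ≤ 1 := hN₀ _ (le_add_right hN)
      have h3 : ψ (2 ^ (N + q.1)) / 2 ^ (N + q.1) ≤ (2⁻¹:ℝ) ^ (N + q.1) := by
        rw [inv_pow, div_le_iff₀ (by positivity)]
        rw [inv_mul_cancel₀ (by positivity)]
        exact h2
      refine h3.trans (pow_le_pow_of_le_one (by norm_num) (by norm_num) (by omega))
    linarith
  · -- hst : covering
    filter_upwards [eventually_ge_atTop N₀] with N hN x hx
    obtain ⟨hxW, hxC⟩ := hx
    obtain ⟨hxI, hxinf⟩ := hxW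
    obtain ⟨n, hn, hngt⟩ := (infinite_n hxinf).exists_gt (N + N₀)
    obtain ⟨p, hp⟩ := hn
    obtain ⟨m, rfl⟩ : ∃ m, n = N + m := ⟨n - N, by omega⟩
    obtain ⟨i, j, hmem⟩ := mem_cover hxC (hN₀ (N + m) (by omega)) hp
    exact Set.mem_iUnion.mpr ⟨⟨m, i, j⟩, hmem⟩
end

section
/- Let n, m be positive integers with n ≤ m and ψ: ℕ → [0,∞). If the balls B(a/2ⁿ, ψ(2ⁿ)/2ⁿ) and B(b/2^m, ψ(2^m)/2^m) intersect (with a, b integers), then the integer h = b − 2^{m−n}a satisfies |h| < 2^{m−n}ψ(2ⁿ) + ψ(2^m); consequently, A_n ∩ A_m is contained in the union over integers h with |h| < 2^{m−n}ψ(2ⁿ) + ψ(2^m) of the sets X_h = ⋃_{a=0}^{2ⁿ} B(a/2ⁿ + h/2^m, ψ(2^m)/2^m). -/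
open Metric Finset

/-- If the dyadic balls `B(a/2ⁿ, ψ(2ⁿ)/2ⁿ)` and `B(b/2^m, ψ(2^m)/2^m)` intersect
(`n ≤ m`), then `h = b − 2^{m−n}a` satisfies `|h| < 2^{m−n}ψ(2ⁿ) + ψ(2^m)`; consequently
`A_n ∩ A_m ⊆ ⋃_{|h| < 2^{m−n}ψ(2ⁿ) + ψ(2^m)} X_h` with
`X_h = ⋃_{a=0}^{2ⁿ} B(a/2ⁿ + h/2^m, ψ(2^m)/2^m)`. -/
theorem intersection_decomposition (ψ : ℕ → ℝ) (hψ : ∀ i, 0 ≤ ψ i) (n m : ℕ)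
    (hn : 0 < n) (hnm : n ≤ m) :
    (∀ a b : ℤ,
      (ball ((a:ℝ) / 2 ^ n) (ψ (2 ^ n) / 2 ^ n) ∩
        ball ((b:ℝ) / 2 ^ m) (ψ (2 ^ m) / 2 ^ m)).Nonempty →
      |(b:ℝ) - 2 ^ (m - n) * (a:ℝ)| < 2 ^ (m - n) * ψ (2 ^ n) + ψ (2 ^ m)) ∧
    ((⋃ a ∈ range (2 ^ n + 1), ball ((a:ℝ) / 2 ^ n) (ψ (2 ^ n) / 2 ^ n)) ∩
        (⋃ b ∈ range (2 ^ m + 1), ball ((b:ℝ) / 2 ^ m) (ψ (2 ^ m) / 2 ^ m)) ⊆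
      ⋃ (h : ℤ) (_ : |(h:ℝ)| < 2 ^ (m - n) * ψ (2 ^ n) + ψ (2 ^ m)),
        ⋃ a ∈ range (2 ^ n + 1),
          ball ((a:ℝ) / 2 ^ n + (h:ℝ) / 2 ^ m) (ψ (2 ^ m) / 2 ^ m)) := by
  have h2n : (0:ℝ) < 2 ^ n := by positivity
  have h2m : (0:ℝ) < 2 ^ m := by positivity
  have hpow : (2:ℝ) ^ (m - n) * 2 ^ n = 2 ^ m := by
    rw [← pow_add, Nat.sub_add_cancel hnm]
  have key : ∀ a b : ℤ,
      (ball ((a:ℝ) / 2 ^ n) (ψ (2 ^ n) / 2 ^ n) ∩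
        ball ((b:ℝ) / 2 ^ m) (ψ (2 ^ m) / 2 ^ m)).Nonempty →
      |(b:ℝ) - 2 ^ (m - n) * (a:ℝ)| < 2 ^ (m - n) * ψ (2 ^ n) + ψ (2 ^ m) := by
    rintro a b ⟨x, hx1, hx2⟩
    rw [mem_ball, Real.dist_eq] at hx1 hx2
    have hd : |(b:ℝ)/2^m - (a:ℝ)/2^n| < ψ (2^n)/2^n + ψ (2^m)/2^m := by
      calc |(b:ℝ)/2^m - (a:ℝ)/2^n|
          = |(x - (a:ℝ)/2^n) + -(x - (b:ℝ)/2^m)| := by ring_nf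
        _ ≤ |x - (a:ℝ)/2^n| + |x - (b:ℝ)/2^m| := by
            simpa [abs_sub_comm] using abs_add_le (x - (a:ℝ)/2^n) (-(x - (b:ℝ)/2^m))
        _ < ψ (2^n)/2^n + ψ (2^m)/2^m := by linarith
    have e1 : (b:ℝ) - 2^(m-n)*(a:ℝ) = 2^m * ((b:ℝ)/2^m - (a:ℝ)/2^n) := by
      rw [mul_sub]
      rw [mul_div_cancel₀ _ (ne_of_gt h2m), ← hpow]
      field_simp
    have e2 : (2:ℝ)^(m-n) * ψ (2^n) + ψ (2^m) = 2^m * (ψ (2^n)/2^n + ψ (2^m)/2^m) := by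
      rw [mul_add, mul_div_cancel₀ _ (ne_of_gt h2m), ← hpow]
      field_simp
    rw [e1, e2, abs_mul, abs_of_pos h2m]
    exact mul_lt_mul_of_pos_left hd h2m
  refine ⟨key, ?_⟩
  rintro x ⟨hxA, hxB⟩
  simp only [Set.mem_iUnion, exists_prop] at hxA hxB ⊢
  obtain ⟨a, ha, hxa⟩ := hxA
  obtain ⟨b, hb, hxb⟩ := hxB
  refine ⟨(b:ℤ) - 2^(m-n) * (a:ℤ), ?_, a, ha, ?_⟩
  · have := key a b ⟨x, by simpa using hxa, by simpa using hxb⟩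
    push_cast
    push_cast at this
    exact this
  · have e3 : (a:ℝ)/2^n + (((b:ℤ) - 2^(m-n) * (a:ℤ) : ℤ):ℝ)/2^m = (b:ℝ)/2^m := by
      push_cast
      field_simp
      rw [← hpow]
      ring
    rw [e3]
    exact hxb
end
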